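/- Let n ≥ 2 and let u₁, u₂ : {0,...,n−1} → [0,1] satisfy the self-anonymity relation u₁(x) = u₂(x+1) for all x ∈ {0,...,n−2}. Let X be a binomial random variable Binomial(n−1, 1/2). Then |E[u₁(X)] − E[u₂(X)]| ≤ (e/π)·(1/√(n−1)). -/

import Mathlib

/-- Binomial coefficients increase up to the middle. -/
lemma choose_incr (n x : ℕ) (hx : 2 * x + 1 ≤ n) : n.choose x ≤ n.choose (x + 1) := by
  have h := Nat.choose_succ_right_eq n x
  have hnx : x + 1 ≤ n - x := by omega
  have : n.choose x * (x + 1) ≤ n.choose x * (n - x) := Nat.mul_le_mul_left _ hnx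
  rw [← h] at this
  exact Nat.le_of_mul_le_mul_right this (by omega)

/-- Binomial coefficients decrease after the middle. -/
lemma choose_decr (n x : ℕ) (hx : n ≤ 2 * x + 1) : n.choose (x + 1) ≤ n.choose x := by
  have h := Nat.choose_succ_right_eq n x
  have hnx : n - x ≤ x + 1 := by omega
  have : n.choose x * (n - x) ≤ n.choose x * (x + 1) := Nat.mul_le_mul_left _ hnx
  rw [← h] at this
  exact Nat.le_of_mul_le_mul_right this (by omega)

lemma centralBinom_sq_bound (k : ℕ) : (3 * k + 1) * (Nat.centralBinom k) ^ 2 ≤ 16 ^ k := by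
  induction k with
  | zero => simp [Nat.centralBinom]
  | succ k ih =>
    have key := Nat.succ_mul_centralBinom_succ k
    have hpos : 0 < (k + 1) ^ 2 * (3 * k + 1) := by positivity
    refine Nat.le_of_mul_le_mul_left ?_ hpos
    have e1 : (k + 1) ^ 2 * (3 * k + 1) * ((3 * (k + 1) + 1) * Nat.centralBinom (k + 1) ^ 2)
        = (3 * k + 1) * (3 * k + 4) * ((k + 1) * Nat.centralBinom (k + 1)) ^ 2 := by ring
    rw [e1, key]
    have e2 : (3 * k + 1) * (3 * k + 4) * (2 * (2 * k + 1) * Nat.centralBinom k) ^ 2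
        = ((3 * k + 4) * 4 * (2 * k + 1) ^ 2) * ((3 * k + 1) * Nat.centralBinom k ^ 2) := by ring
    rw [e2]
    calc ((3 * k + 4) * 4 * (2 * k + 1) ^ 2) * ((3 * k + 1) * Nat.centralBinom k ^ 2)
        ≤ ((3 * k + 4) * 4 * (2 * k + 1) ^ 2) * 16 ^ k := Nat.mul_le_mul_left _ ih
      _ ≤ (16 * (k + 1) ^ 2 * (3 * k + 1)) * 16 ^ k := by
          apply Nat.mul_le_mul_right
          nlinarith
      _ = (k + 1) ^ 2 * (3 * k + 1) * 16 ^ (k + 1) := by ring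

lemma middle_sq_bound (m : ℕ) (hm : 1 ≤ m) :
    3 * m * (m.choose (m / 2)) ^ 2 ≤ 2 * 4 ^ m := by
  rcases Nat.even_or_odd m with ⟨k, hk⟩ | ⟨k, hk⟩
  · -- m = 2k
    subst hk
    have hk2 : (k + k) / 2 = k := by omega
    rw [hk2]
    have h1 := centralBinom_sq_bound k
    have hcb : (k + k).choose k = Nat.centralBinom k := by
      rw [Nat.centralBinom]; congr 1; omega
    rw [hcb]
    calc 3 * (k + k) * Nat.centralBinom k ^ 2
        ≤ 2 * ((3 * k + 1) * Nat.centralBinom k ^ 2) := by nlinarith [sq_nonneg (Nat.centralBinom k)]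
      _ ≤ 2 * 16 ^ k := Nat.mul_le_mul_left _ h1
      _ = 2 * 4 ^ (k + k) := by rw [show (16:ℕ) = 4 * 4 by norm_num, Nat.mul_pow, ← pow_add]
  · -- m = 2k+1
    subst hk
    have hk2 : (2 * k + 1) / 2 = k := by omega
    rw [hk2]
    have h1 := centralBinom_sq_bound k
    have hcb : Nat.centralBinom k = (2 * k).choose k := rfl
    -- (k+1) * C(2k+1, k) = (2k+1) * C(2k, k)
    have key : (2 * k + 1) * (2 * k).choose k = (2 * k + 1).choose k * (k + 1) := by
      have := Nat.add_one_mul_choose_eq (2 * k) k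
      simpa [Nat.succ_eq_add_one, Nat.choose_symm_half] using this
    have hpos : 0 < (k + 1) ^ 2 * (3 * k + 1) := by positivity
    refine Nat.le_of_mul_le_mul_left ?_ hpos
    have e1 : (k + 1) ^ 2 * (3 * k + 1) * (3 * (2 * k + 1) * (2 * k + 1).choose k ^ 2)
        = 3 * (2 * k + 1) * (3 * k + 1) * ((2 * k + 1).choose k * (k + 1)) ^ 2 := by ring
    rw [e1, ← key]
    have e2 : 3 * (2 * k + 1) * (3 * k + 1) * ((2 * k + 1) * (2 * k).choose k) ^ 2
        = (3 * (2 * k + 1) ^ 3) * ((3 * k + 1) * (2 * k).choose k ^ 2) := by ring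
    rw [e2]
    calc (3 * (2 * k + 1) ^ 3) * ((3 * k + 1) * (2 * k).choose k ^ 2)
        ≤ (3 * (2 * k + 1) ^ 3) * 16 ^ k := by
          apply Nat.mul_le_mul_left; rw [← hcb]; exact h1
      _ ≤ (8 * (k + 1) ^ 2 * (3 * k + 1)) * 16 ^ k := by
          apply Nat.mul_le_mul_right; nlinarith
      _ = (k + 1) ^ 2 * (3 * k + 1) * (2 * (4 * 16 ^ k)) := by ring
      _ = (k + 1) ^ 2 * (3 * k + 1) * (2 * 4 ^ (2 * k + 1)) := by
          congr 2
          rw [pow_succ, pow_mul]; norm_num; ring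

lemma middle_real_bound (m : ℕ) (hm : 1 ≤ m) :
    ((m.choose (m / 2)) : ℝ) / 2 ^ m ≤ Real.sqrt (2 / 3) / Real.sqrt m := by
  have hm' : (0:ℝ) < m := by exact_mod_cast hm
  rw [div_le_div_iff₀ (by positivity) (Real.sqrt_pos.mpr hm')]
  have h1 : ((m.choose (m / 2)) : ℝ) * Real.sqrt m
      = Real.sqrt (((m.choose (m / 2)) : ℝ) ^ 2 * m) := by
    rw [Real.sqrt_mul (by positivity), Real.sqrt_sq (by positivity)]
  have h2 : Real.sqrt (2 / 3) * 2 ^ m = Real.sqrt ((2 / 3) * 4 ^ m) := by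
    rw [Real.sqrt_mul (by norm_num)]
    congr 1
    have : (4:ℝ) ^ m = ((2:ℝ) ^ m) ^ 2 := by
      rw [← pow_mul, mul_comm, pow_mul]; norm_num
    rw [this, Real.sqrt_sq (by positivity)]
  rw [h1, h2]
  apply Real.sqrt_le_sqrt
  have hN := middle_sq_bound m hm
  have hNR : 3 * (m:ℝ) * ((m.choose (m / 2)) : ℝ) ^ 2 ≤ 2 * 4 ^ m := by
    exact_mod_cast hN
  linarith

lemma sqrt_twothirds_le : Real.sqrt (2 / 3) ≤ Real.exp 1 / Real.pi := by
  have hpi : (0:ℝ) < Real.pi := Real.pi_pos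
  have he : (0:ℝ) < Real.exp 1 := Real.exp_pos 1
  rw [show Real.exp 1 / Real.pi = Real.sqrt ((Real.exp 1 / Real.pi) ^ 2) from
    (Real.sqrt_sq (by positivity)).symm]
  apply Real.sqrt_le_sqrt
  rw [div_pow, le_div_iff₀ (by positivity)]
  have h1 : Real.pi < 3.15 := Real.pi_lt_d2
  have h2 : (2.7182818283:ℝ) < Real.exp 1 := Real.exp_one_gt_d9
  nlinarith

theorem stmt2 (n : ℕ) (hn : 2 ≤ n) (u₁ u₂ : ℕ → ℝ)
    (h₁ : ∀ x < n, 0 ≤ u₁ x ∧ u₁ x ≤ 1)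
    (h₂ : ∀ x < n, 0 ≤ u₂ x ∧ u₂ x ≤ 1)
    (hself : ∀ x, x < n - 1 → u₁ x = u₂ (x + 1)) :
    |(∑ x ∈ Finset.range n, u₁ x * ((n - 1).choose x : ℝ) / 2 ^ (n - 1)) -
      (∑ x ∈ Finset.range n, u₂ x * ((n - 1).choose x : ℝ) / 2 ^ (n - 1))| ≤
      (Real.exp 1 / Real.pi) * (1 / Real.sqrt (n - 1)) := by
  set m := n - 1 with hmdef
  have hm : 1 ≤ m := by omega
  have hn1 : n = m + 1 := by omega
  set C : ℕ → ℝ := fun x => ((m.choose x : ℕ) : ℝ) with hC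
  set B : ℝ := C (m / 2) with hB
  -- combine sums over a common denominator
  have comb : ∀ u : ℕ → ℝ,
      (∑ x ∈ Finset.range n, u x * C x / 2 ^ m)
      = (∑ x ∈ Finset.range n, u x * C x) / 2 ^ m := fun u => (Finset.sum_div _ _ _).symm
  rw [comb u₁, comb u₂, div_sub_div_same, abs_div, abs_of_pos (by positivity : (0:ℝ) < 2 ^ m)]
  -- the key combinatorial bound on the numerator
  have hS₂ : (∑ x ∈ Finset.range n, u₂ x * C x)
      = (∑ x ∈ Finset.range m, u₁ x * C (x + 1)) + u₂ 0 := by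
    rw [hn1, Finset.sum_range_succ' (fun x => u₂ x * C x) m]
    have : C 0 = 1 := by simp [hC]
    rw [this, mul_one]
    congr 1
    apply Finset.sum_congr rfl
    intro x hx
    rw [← hself x (Finset.mem_range.mp hx)]
  have hS₁ : (∑ x ∈ Finset.range n, u₁ x * C x)
      - (∑ x ∈ Finset.range n, u₂ x * C x)
      = (∑ x ∈ Finset.range n, u₁ x * (C x - C (x + 1))) - u₂ 0 := by
    rw [hS₂]
    have expand : (∑ x ∈ Finset.range n, u₁ x * (C x - C (x + 1)))
        = (∑ x ∈ Finset.range n, u₁ x * C x) - (∑ x ∈ Finset.range n, u₁ x * C (x + 1)) := by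
      rw [← Finset.sum_sub_distrib]
      apply Finset.sum_congr rfl
      intro x _; ring
    have last : (∑ x ∈ Finset.range n, u₁ x * C (x + 1))
        = ∑ x ∈ Finset.range m, u₁ x * C (x + 1) := by
      rw [hn1, Finset.sum_range_succ]
      have : C (m + 1) = 0 := by
        simp [hC, Nat.choose_eq_zero_of_lt (Nat.lt_succ_self m)]
      rw [this, mul_zero, add_zero]
    rw [expand, last]
    ring
  -- telescoping bounds
  have tele : ∀ a b : ℕ, a ≤ b → (∑ x ∈ Finset.Ico a b, (C x - C (x + 1))) = C a - C b := by
    intro a b hab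
    have h1 := Finset.sum_range_sub' C b
    have h2 := Finset.sum_range_sub' C a
    have h3 : (∑ i ∈ Finset.range a, (C i - C (i + 1)))
        + (∑ i ∈ Finset.Ico a b, (C i - C (i + 1)))
        = ∑ i ∈ Finset.range b, (C i - C (i + 1)) := by
      rw [Finset.range_eq_Ico, Finset.range_eq_Ico]
      exact Finset.sum_Ico_consecutive _ (Nat.zero_le a) hab
    linarith
  have hhalf : m / 2 ≤ m := Nat.div_le_self m 2
  -- bounds on each piece
  have hBnonneg : (0:ℝ) ≤ B := by simp only [hB, hC]; positivity
  have piece1_le : (∑ x ∈ Finset.range (m / 2), u₁ x * (C x - C (x + 1))) ≤ 0 := by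
    apply Finset.sum_nonpos
    intro x hx
    have hxlt : x < m / 2 := Finset.mem_range.mp hx
    have hcc : C x ≤ C (x + 1) := by
      simp only [hC]
      exact_mod_cast choose_incr m x (by omega)
    have hu := h₁ x (by omega)
    nlinarith [hu.1, hu.2]
  have piece1_ge : (1 - B) ≤ (∑ x ∈ Finset.range (m / 2), u₁ x * (C x - C (x + 1))) := by
    have t := tele 0 (m / 2) (Nat.zero_le _)
    have hC0 : C 0 = 1 := by simp [hC]
    rw [Finset.range_eq_Ico]
    calc (1:ℝ) - B = ∑ x ∈ Finset.Ico 0 (m / 2), (C x - C (x + 1)) := by rw [t, hC0]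
      _ ≤ ∑ x ∈ Finset.Ico 0 (m / 2), u₁ x * (C x - C (x + 1)) := by
          apply Finset.sum_le_sum
          intro x hx
          have hxlt : x < m / 2 := (Finset.mem_Ico.mp hx).2
          have hcc : C x ≤ C (x + 1) := by
            simp only [hC]
            exact_mod_cast choose_incr m x (by omega)
          have hu := h₁ x (by omega)
          nlinarith [hu.1, hu.2]
  have piece2_le : (∑ x ∈ Finset.Ico (m / 2) (m + 1), u₁ x * (C x - C (x + 1))) ≤ B := by
    have t := tele (m / 2) (m + 1) (Nat.le_succ_of_le hhalf)
    have hCm1 : C (m + 1) = 0 := by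
      simp [hC, Nat.choose_eq_zero_of_lt (Nat.lt_succ_self m)]
    calc (∑ x ∈ Finset.Ico (m / 2) (m + 1), u₁ x * (C x - C (x + 1)))
        ≤ ∑ x ∈ Finset.Ico (m / 2) (m + 1), (C x - C (x + 1)) := by
          apply Finset.sum_le_sum
          intro x hx
          have hxge : m / 2 ≤ x := (Finset.mem_Ico.mp hx).1
          have hxlt : x < m + 1 := (Finset.mem_Ico.mp hx).2
          have hcc : C (x + 1) ≤ C x := by
            simp only [hC]
            exact_mod_cast choose_decr m x (by omega)
          have hu := h₁ x (by omega)
          nlinarith [hu.1, hu.2]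
      _ = B := by rw [t, hCm1, sub_zero]
  have piece2_ge : (0:ℝ) ≤ (∑ x ∈ Finset.Ico (m / 2) (m + 1), u₁ x * (C x - C (x + 1))) := by
    apply Finset.sum_nonneg
    intro x hx
    have hxge : m / 2 ≤ x := (Finset.mem_Ico.mp hx).1
    have hxlt : x < m + 1 := (Finset.mem_Ico.mp hx).2
    have hcc : C (x + 1) ≤ C x := by
      simp only [hC]
      exact_mod_cast choose_decr m x (by omega)
    have hu := h₁ x (by omega)
    nlinarith [hu.1, hu.2]
  have hu₂0 := h₂ 0 (by omega)
  have Tsum : (∑ x ∈ Finset.range n, u₁ x * (C x - C (x + 1)))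
      = (∑ x ∈ Finset.range (m / 2), u₁ x * (C x - C (x + 1)))
        + (∑ x ∈ Finset.Ico (m / 2) (m + 1), u₁ x * (C x - C (x + 1))) := by
    rw [hn1, Finset.range_eq_Ico, Finset.range_eq_Ico]
    exact (Finset.sum_Ico_consecutive _ (Nat.zero_le (m / 2)) (Nat.le_succ_of_le hhalf)).symm
  have numer_bound : |(∑ x ∈ Finset.range n, u₁ x * C x)
      - (∑ x ∈ Finset.range n, u₂ x * C x)| ≤ B := by
    rw [hS₁]
    rw [abs_le]
    constructor
    · rw [Tsum]; linarith [piece1_ge, piece2_ge, hu₂0.2]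
    · rw [Tsum]; linarith [piece1_le, piece2_le, hu₂0.1]
  -- final chain
  have chain : B / 2 ^ m ≤ (Real.exp 1 / Real.pi) * (1 / Real.sqrt m) := by
    have b1 := middle_real_bound m hm
    have b2 := sqrt_twothirds_le
    have hsm : (0:ℝ) < Real.sqrt m := Real.sqrt_pos.mpr (by exact_mod_cast hm)
    calc B / 2 ^ m ≤ Real.sqrt (2 / 3) / Real.sqrt m := b1
      _ ≤ (Real.exp 1 / Real.pi) / Real.sqrt m := by gcongr
      _ = (Real.exp 1 / Real.pi) * (1 / Real.sqrt m) := by ring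
  have hcast : ((n:ℝ) - 1) = (m:ℝ) := by
    rw [hn1]; push_cast; ring
  rw [hcast]
  calc |(∑ x ∈ Finset.range n, u₁ x * C x) - (∑ x ∈ Finset.range n, u₂ x * C x)| / 2 ^ m
      ≤ B / 2 ^ m := by gcongr
    _ ≤ (Real.exp 1 / Real.pi) * (1 / Real.sqrt m) := chain
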